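/- For n ≥ 2 and any β ∈ T_n, f_{n+1}(ι^R(β)) = 0 and f_{n+1}(ι^L(β)) = 0. -/

import Mathlib

open Matrix Polynomial

def Vmat {R : Type*} [CommRing R] (x y : R) (m i : ℕ) : Matrix (Fin m) (Fin m) R :=
  Matrix.of fun r c =>
    if (c : ℕ) + 1 = i then
      if (r : ℕ) + 1 = i then -1
      else if (r : ℕ) + 2 = i then y
      else if (r : ℕ) = i then x
      else 0
    else if r = c then 1 else 0

def twinRels (m : ℕ) : Set (FreeGroup (Fin m)) :=
  {r | (∃ i, r = FreeGroup.of i * FreeGroup.of i) ∨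
       (∃ i j : Fin m, (i : ℕ) + 1 < (j : ℕ) ∧
          r = FreeGroup.of i * FreeGroup.of j * (FreeGroup.of i)⁻¹ * (FreeGroup.of j)⁻¹)}

def TwinGroup (m : ℕ) : Type := PresentedGroup (twinRels m)

instance (m : ℕ) : Group (TwinGroup m) :=
  inferInstanceAs (Group (PresentedGroup (twinRels m)))

def TwinGroup.of {m : ℕ} (i : Fin m) : TwinGroup m := PresentedGroup.of i

noncomputable abbrev Zx : Type := FractionRing (Polynomial ℤ)

noncomputable def xx : Zx := algebraMap (Polynomial ℤ) Zx Polynomial.X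

noncomputable def Ux (n : ℕ) : Zx := Polynomial.eval xx⁻¹ (Polynomial.Chebyshev.U Zx n)

lemma Vmat_mulVec_single {x y : Zx} {M : ℕ} (k : ℕ) (j : Fin M) (hk : (j : ℕ) + 1 ≠ k) :
    (Vmat x y M k).mulVec (Pi.single j (1 : Zx)) = Pi.single j 1 := by
  funext r
  simp only [Matrix.mulVec_single, mul_one]
  simp [Vmat, Ne.symm hk, Pi.single_apply, eq_comm]

lemma fixed_of_gens {m : ℕ} (φ : TwinGroup m →* Matrix (Fin (m+1)) (Fin (m+1)) Zx)
    (v : Fin (m+1) → Zx) (h : ∀ i, (φ (TwinGroup.of i)).mulVec v = v) (β : TwinGroup m) :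
    (φ β).mulVec v = v := by
  let S : Subgroup (TwinGroup m) :=
  { carrier := {g | (φ g).mulVec v = v}
    one_mem' := by simp
    mul_mem' := by
      intro a b ha hb
      simp only [Set.mem_setOf_eq] at *
      rw [φ.map_mul, ← Matrix.mulVec_mulVec, hb, ha]
    inv_mem' := by
      intro a ha
      simp only [Set.mem_setOf_eq] at *
      have h1 : (φ a⁻¹ * φ a).mulVec v = v := by
        rw [← φ.map_mul, inv_mul_cancel, φ.map_one]; simp
      calc (φ a⁻¹).mulVec v = (φ a⁻¹).mulVec ((φ a).mulVec v) := by rw [ha]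
        _ = (φ a⁻¹ * φ a).mulVec v := by rw [Matrix.mulVec_mulVec]
        _ = v := h1 }
  have hS : S = ⊤ := by
    have hc : Subgroup.closure (Set.range (TwinGroup.of (m := m))) = ⊤ :=
      PresentedGroup.closure_range_of (twinRels m)
    rw [eq_top_iff, ← hc, Subgroup.closure_le]
    rintro _ ⟨i, rfl⟩
    exact h i
  have : β ∈ S := hS ▸ Subgroup.mem_top β
  exact this

theorem stmt13 (m : ℕ) (hm : 1 ≤ m)
    (ψ' : TwinGroup (m+1) →* Matrix (Fin (m+1)) (Fin (m+1)) Zx)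
    (hψ' : ∀ i : Fin (m+1), ψ' (TwinGroup.of i) = Vmat xx xx (m+1) ((i : ℕ) + 1))
    (ιR ιL : TwinGroup m →* TwinGroup (m+1))
    (hιR : ∀ i : Fin m, ιR (TwinGroup.of i) = TwinGroup.of i.castSucc)
    (hιL : ∀ i : Fin m, ιL (TwinGroup.of i) = TwinGroup.of i.succ)
    (β : TwinGroup m) :
    Matrix.det (ψ' (ιR β) - 1) / ((-xx)^(m+1) * Ux (m+1)) = 0 ∧
    Matrix.det (ψ' (ιL β) - 1) / ((-xx)^(m+1) * Ux (m+1)) = 0 := by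
  have key : ∀ (j : Fin (m+1)) (φ : TwinGroup m →* TwinGroup (m+1)),
      (∀ i : Fin m, (ψ' (φ (TwinGroup.of i))).mulVec (Pi.single j 1) = Pi.single j 1) →
      Matrix.det (ψ' (φ β) - 1) = 0 := by
    intro j φ hfix
    rw [← Matrix.exists_mulVec_eq_zero_iff]
    refine ⟨Pi.single j 1, ?_, ?_⟩
    · intro hz
      have := congrFun hz j
      simp at this
    · have h2 : ((ψ'.comp φ) β).mulVec (Pi.single j 1) = Pi.single j 1 :=
        fixed_of_gens (ψ'.comp φ) _ (fun i => hfix i) β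
      simp only [MonoidHom.comp_apply] at h2
      rw [Matrix.sub_mulVec, h2, Matrix.one_mulVec]
      simp
  constructor
  · rw [key (Fin.last m) ιR ?_, zero_div]
    intro i
    rw [hιR, hψ']
    exact Vmat_mulVec_single _ _ (by simp [Fin.last]; omega)
  · rw [key 0 ιL ?_, zero_div]
    intro i
    rw [hιL, hψ']
    exact Vmat_mulVec_single _ _ (by simp)
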